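/- The linear map U: ℤ⁴ → ℤ⁴ given by the matrix with rows (−1, 0, −2, 1), (0, −1, −3, 0), (1, 0, 2, 0), (0, 1, 2, 0) is unimodular (its determinant has absolute value 1), and U maps the set {h₁, …, h₇} bijectively onto the set H = {h₁, h₄−h₂, h₇−h₂, h₄−h₃, h₆−h₃, h₄−h₅, h₆−h₅}; explicitly, U(h₁)=h₆−h₅, U(h₂)=h₄−h₂, U(h₃)=h₄−h₅, U(h₄)=h₁, U(h₅)=h₆−h₃, U(h₆)=h₄−h₃, U(h₇)=h₇−h₂. -/
import Mathlib


/-- The seven lattice points `h₁, …, h₇` (0-indexed as `h 0, …, h 6`). -/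
def h : Fin 7 → (Fin 4 → ℤ) :=
  ![![1,0,0,0], ![0,1,0,0], ![0,0,1,0], ![0,0,0,1],
    ![2,3,-2,-1], ![1,3,-1,-1], ![1,2,-1,0]]

/-- The matrix `U` (acting on column vectors). -/
def U : Matrix (Fin 4) (Fin 4) ℤ :=
  !![-1, 0, -2, 1;
      0, -1, -3, 0;
      1, 0, 2, 0;
      0, 1, 2, 0]

/-- The seven-element set `H`. -/
def H : Set (Fin 4 → ℤ) :=
  {h 0, h 3 - h 1, h 6 - h 1, h 3 - h 2, h 5 - h 2, h 3 - h 4, h 5 - h 4}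

private lemma e0 : U.mulVec (h 0) = h 5 - h 4 := by decide
private lemma e1 : U.mulVec (h 1) = h 3 - h 1 := by decide
private lemma e2 : U.mulVec (h 2) = h 3 - h 4 := by decide
private lemma e3 : U.mulVec (h 3) = h 0 := by decide
private lemma e4 : U.mulVec (h 4) = h 5 - h 2 := by decide
private lemma e5 : U.mulVec (h 5) = h 3 - h 2 := by decide
private lemma e6 : U.mulVec (h 6) = h 6 - h 1 := by decide

/-- `U` is unimodular and maps `{h₁, …, h₇}` bijectively onto `H`, with
`U(h₁)=h₆−h₅`, `U(h₂)=h₄−h₂`, `U(h₃)=h₄−h₅`, `U(h₄)=h₁`, `U(h₅)=h₆−h₃`,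
`U(h₆)=h₄−h₃`, `U(h₇)=h₇−h₂`. -/
theorem stmt_7 :
    |U.det| = 1 ∧
    Set.BijOn (fun v => U.mulVec v) ({h 0, h 1, h 2, h 3, h 4, h 5, h 6} : Set (Fin 4 → ℤ)) H ∧
    U.mulVec (h 0) = h 5 - h 4 ∧
    U.mulVec (h 1) = h 3 - h 1 ∧
    U.mulVec (h 2) = h 3 - h 4 ∧
    U.mulVec (h 3) = h 0 ∧
    U.mulVec (h 4) = h 5 - h 2 ∧
    U.mulVec (h 5) = h 3 - h 2 ∧
    U.mulVec (h 6) = h 6 - h 1 := by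
  refine ⟨by decide, ⟨?_, ?_, ?_⟩, e0, e1, e2, e3, e4, e5, e6⟩
  · intro x hx
    rcases hx with rfl | rfl | rfl | rfl | rfl | rfl | rfl <;>
      simp only [e0, e1, e2, e3, e4, e5, e6, H, Set.mem_insert_iff, Set.mem_singleton_iff] <;>
      tauto
  · intro x hx y hy hxy
    simp only at hxy
    rcases hx with rfl | rfl | rfl | rfl | rfl | rfl | rfl <;>
      rcases hy with rfl | rfl | rfl | rfl | rfl | rfl | rfl <;>
      simp only [e0, e1, e2, e3, e4, e5, e6] at hxy <;>
      first | rfl | (exact absurd hxy (by decide))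
  · intro y hy
    rcases hy with rfl | rfl | rfl | rfl | rfl | rfl | rfl
    · exact ⟨h 3, by simp, e3⟩
    · exact ⟨h 1, by simp, e1⟩
    · exact ⟨h 6, by simp, e6⟩
    · exact ⟨h 5, by simp, e5⟩
    · exact ⟨h 4, by simp, e4⟩
    · exact ⟨h 2, by simp, e2⟩
    · exact ⟨h 0, by simp, e0⟩
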